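/- arXiv:math/9910132 — 3 statements merged into one kernel-verified Lean document; each statement's English description precedes it below -/
import Mathlib

section
/- Let K be a field, let n be a positive integer, and let G be a subset of the matrix algebra M_n(K). Then the unital K-subalgebra of M_n(K) generated by G is equal to the K-linear span of the set of all products a_1 a_2 ⋯ a_i with a_1, …, a_i ∈ G and 0 ≤ i < n², where the empty product (i = 0) is the identity matrix. -/
section Aux

variable {K : Type*} [Field K] {n : ℕ}

private def Sset (G : Set (Matrix (Fin n) (Fin n) K)) (i : ℕ) :
    Set (Matrix (Fin n) (Fin n) K) :=
  {M | ∃ l : List (Matrix (Fin n) (Fin n) K),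
      l.length ≤ i ∧ (∀ a ∈ l, a ∈ G) ∧ M = l.prod}

private def Wmod (G : Set (Matrix (Fin n) (Fin n) K)) (i : ℕ) :
    Submodule K (Matrix (Fin n) (Fin n) K) :=
  Submodule.span K (Sset G i)

private lemma Wmod_mono (G : Set (Matrix (Fin n) (Fin n) K)) {i j : ℕ} (h : i ≤ j) :
    Wmod G i ≤ Wmod G j :=
  Submodule.span_mono (fun _M ⟨l, hl, hG, hM⟩ => ⟨l, hl.trans h, hG, hM⟩)

private lemma mul_mem_Wmod (G : Set (Matrix (Fin n) (Fin n) K)) {a : Matrix (Fin n) (Fin n) K}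
    (ha : a ∈ G) {i : ℕ} {x : Matrix (Fin n) (Fin n) K} (hx : x ∈ Wmod G i) :
    a * x ∈ Wmod G (i + 1) := by
  induction hx using Submodule.span_induction with
  | mem p hp =>
    obtain ⟨l, hl, hG, rfl⟩ := hp
    exact Submodule.subset_span ⟨a :: l, by simpa using hl,
      by simpa using And.intro ha hG, (List.prod_cons).symm⟩
  | zero => simp only [mul_zero]; exact (Wmod G (i + 1)).zero_mem
  | add x y _ _ hx hy => rw [mul_add]; exact (Wmod G (i + 1)).add_mem hx hy
  | smul c x _ hx => rw [mul_smul_comm]; exact (Wmod G (i + 1)).smul_mem c hx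

private lemma Wmod_stab (G : Set (Matrix (Fin n) (Fin n) K)) {i : ℕ}
    (h : Wmod G i = Wmod G (i + 1)) : ∀ k, Wmod G (i + k) = Wmod G i := by
  intro k
  induction k with
  | zero => rfl
  | succ k ih =>
    refine le_antisymm ?_ (Wmod_mono G (Nat.le_add_right i (k + 1)))
    rw [Wmod]
    refine Submodule.span_le.2 ?_
    rintro M ⟨l, hl, hG, rfl⟩
    match l with
    | [] => exact Submodule.subset_span ⟨[], Nat.zero_le i, by simp, rfl⟩
    | a :: t =>
      have ht : t.prod ∈ Wmod G i := by
        rw [← ih]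
        exact Submodule.subset_span ⟨t, by simp at hl; omega,
          fun b hb => hG b (List.mem_cons_of_mem a hb), rfl⟩
      have := mul_mem_Wmod G (hG a List.mem_cons_self) ht
      rw [← h] at this
      simpa using this

private lemma prod_mem_Wmod (G : Set (Matrix (Fin n) (Fin n) K)) {m : ℕ}
    (h : Wmod G m = Wmod G (m + 1)) (l : List (Matrix (Fin n) (Fin n) K))
    (hG : ∀ a ∈ l, a ∈ G) : l.prod ∈ Wmod G m := by
  rw [← Wmod_stab G h l.length]
  exact Wmod_mono G (Nat.le_add_left _ _)
    (Submodule.subset_span ⟨l, le_refl _, hG, rfl⟩)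

end Aux

/-- For a field `K`, `n > 0`, and a subset `G` of `M_n(K)`, the unital
`K`-subalgebra generated by `G` equals the `K`-linear span of all products
`a_1 ⋯ a_i` with `a_1, …, a_i ∈ G` and `0 ≤ i < n²` (empty product = identity). -/
theorem stmt0 {K : Type*} [Field K] (n : ℕ) (hn : 0 < n)
    (G : Set (Matrix (Fin n) (Fin n) K)) :
    Subalgebra.toSubmodule (Algebra.adjoin K G) =
      Submodule.span K {M : Matrix (Fin n) (Fin n) K |
        ∃ l : List (Matrix (Fin n) (Fin n) K),
          l.length < n ^ 2 ∧ (∀ a ∈ l, a ∈ G) ∧ M = l.prod} := by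
  have hn2 : 0 < n ^ 2 := pow_pos hn 2
  -- the set in the statement is `Sset G (n^2 - 1)`
  have hset : {M : Matrix (Fin n) (Fin n) K |
      ∃ l : List (Matrix (Fin n) (Fin n) K),
        l.length < n ^ 2 ∧ (∀ a ∈ l, a ∈ G) ∧ M = l.prod} = Sset G (n ^ 2 - 1) := by
    ext M
    simp only [Sset, Set.mem_setOf_eq]
    constructor
    · rintro ⟨l, hl, hG, rfl⟩
      exact ⟨l, Nat.le_pred_of_lt hl, hG, rfl⟩
    · rintro ⟨l, hl, hG, rfl⟩
      exact ⟨l, lt_of_le_of_lt hl (Nat.pred_lt hn2.ne'), hG, rfl⟩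
  rw [hset]
  show Subalgebra.toSubmodule (Algebra.adjoin K G) = Wmod G (n ^ 2 - 1)
  -- there is a stabilization step `j < n^2`
  have hone : (1 : Matrix (Fin n) (Fin n) K) ≠ 0 := by
    intro h
    have := congrFun (congrFun h ⟨0, hn⟩) ⟨0, hn⟩
    simp [Matrix.one_apply] at this
  have hfr : Module.finrank K (Matrix (Fin n) (Fin n) K) = n ^ 2 := by
    rw [Module.finrank_matrix, Module.finrank_self]
    simp [sq]
  have hexists : ∃ j < n ^ 2, Wmod G j = Wmod G (j + 1) := by
    by_contra hcon
    push_neg at hcon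
    have hstrict : ∀ j < n ^ 2, Wmod G j < Wmod G (j + 1) := fun j hj =>
      lt_of_le_of_ne (Wmod_mono G (Nat.le_succ j)) (hcon j hj)
    have hrank : ∀ j ≤ n ^ 2, j + 1 ≤ Module.finrank K (Wmod G j) := by
      intro j
      induction j with
      | zero =>
        intro _
        rw [Nat.succ_le_iff, Module.finrank_pos_iff]
        have h1 : (1 : Matrix (Fin n) (Fin n) K) ∈ Wmod G 0 :=
          Submodule.subset_span ⟨[], le_refl _, by simp, rfl⟩
        exact nontrivial_of_ne ⟨1, h1⟩ 0 (fun h => hone (congrArg Subtype.val h))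
      | succ j ih =>
        intro hj
        have h1 := ih (le_of_lt (Nat.lt_of_succ_le hj))
        have h2 := Submodule.finrank_lt_finrank_of_lt
          (hstrict j (Nat.lt_of_succ_le hj))
        omega
    have := hrank (n ^ 2) (le_refl _)
    have hle := Submodule.finrank_le (Wmod G (n ^ 2))
    rw [hfr] at hle
    omega
  obtain ⟨j, hj, hstab⟩ := hexists
  -- transfer stabilization to `n^2 - 1`
  have hjle : j ≤ n ^ 2 - 1 := Nat.le_pred_of_lt hj
  have key : ∀ k, j ≤ k → Wmod G k = Wmod G j := by
    intro k hk
    obtain ⟨d, rfl⟩ := Nat.exists_eq_add_of_le hk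
    exact Wmod_stab G hstab d
  have hstab' : Wmod G (n ^ 2 - 1) = Wmod G (n ^ 2 - 1 + 1) := by
    rw [key _ hjle, key _ (hjle.trans (Nat.le_succ _))]
  apply le_antisymm
  · rw [Algebra.adjoin_eq_span]
    refine Submodule.span_le.2 ?_
    intro x hx
    obtain ⟨l, hG, rfl⟩ := Submonoid.exists_list_of_mem_closure hx
    exact prod_mem_Wmod G hstab' l hG
  · refine Submodule.span_le.2 ?_
    rintro M ⟨l, _, hG, rfl⟩
    exact Subalgebra.list_prod_mem _ (fun a ha => Algebra.subset_adjoin (hG a ha))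
end

section
/- Let K be a field and let n ≥ 2. Then there exist matrices b, a_1, …, a_{2(n-1)} ∈ M_n(K) such that the trace of b · s_{2(n-1)}(a_1, …, a_{2(n-1)}) is nonzero. -/
open Finset in
/-- The `m`-th standard polynomial `s_m(a_1, …, a_m) = Σ_{σ ∈ S_m} sgn(σ) a_{σ(1)} ⋯ a_{σ(m)}`. -/
def stdPoly {A : Type*} [Ring A] (m : ℕ) (a : Fin m → A) : A :=
  ∑ σ : Equiv.Perm (Fin m), (Equiv.Perm.sign σ : ℤ) • (List.ofFn fun i => a (σ i)).prod

/-- Entry formula for a product of standard basis matrices. -/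
lemma prodEntry {K : Type*} [Field K] {n : ℕ} :
    ∀ (l : List (Fin n × Fin n)) (hl : l ≠ []) (i j : Fin n),
    ((l.map fun p => Matrix.single p.1 p.2 (1:K)).prod) i j =
      if i = (l.head hl).1 ∧ j = (l.getLast hl).2 ∧ l.IsChain (fun p q => p.2 = q.1)
      then 1 else 0 := by
  intro l
  induction l with
  | nil => intro h; exact absurd rfl h
  | cons a t ih =>
    intro _ i j
    cases t with
    | nil =>
      simp [Matrix.single, Matrix.of_apply, and_assoc, eq_comm]
    | cons b t' =>
      rw [List.map_cons, List.prod_cons]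
      by_cases h : i = a.1
      · subst h
        rw [Matrix.single_mul_apply_same, one_mul,
          ih (List.cons_ne_nil _ _) a.2 j]
        have hgl : (a :: b :: t').getLast (List.cons_ne_nil _ _)
            = (b :: t').getLast (List.cons_ne_nil _ _) := List.getLast_cons _
        have hcond : (a.2 = ((b :: t').head (List.cons_ne_nil _ _)).1 ∧
              j = ((b :: t').getLast (List.cons_ne_nil _ _)).2 ∧
              (b :: t').IsChain (fun p q => p.2 = q.1)) ↔
            (a.1 = ((a :: b :: t').head (List.cons_ne_nil _ _)).1 ∧
              j = ((a :: b :: t').getLast (List.cons_ne_nil _ _)).2 ∧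
              (a :: b :: t').IsChain (fun p q => p.2 = q.1)) := by
          rw [hgl, List.isChain_cons_cons]
          simp only [List.head_cons]
          tauto
        rw [if_congr hcond rfl rfl]
      · rw [Matrix.single_mul_apply_of_ne _ _ _ _ _ h, if_neg]
        simp only [List.head_cons]
        tauto

/-- A permutation of `Fin m` satisfying the staircase chain condition is the identity. -/
lemma perm_aux {m : ℕ} (σ : Equiv.Perm (Fin m))
    (h : ∀ (t : ℕ) (ht : t + 1 < m),
      ((σ ⟨t, by omega⟩ : ℕ) + 1) / 2 = (σ ⟨t + 1, ht⟩ : ℕ) / 2) :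
    σ = 1 := by
  rcases m with _ | m'
  · exact Equiv.ext fun i => i.elim0
  have hsm : StrictMono σ := by
    rw [Fin.strictMono_iff_lt_succ]
    intro i
    have hdiv := h i (by omega)
    have hne : (σ (Fin.castSucc i) : ℕ) ≠ (σ i.succ : ℕ) := by
      intro hc
      have : Fin.castSucc i = i.succ := σ.injective (Fin.val_injective hc)
      have := congrArg Fin.val this
      simp [Fin.val_succ] at this
    have h1 : Fin.castSucc i = (⟨(i : ℕ), by omega⟩ : Fin (m' + 1)) := rfl
    have h2 : i.succ = (⟨(i : ℕ) + 1, by omega⟩ : Fin (m' + 1)) := rfl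
    rw [Fin.lt_iff_val_lt_val, h1, h2]
    rw [h1, h2] at hne
    omega
  have hsm' : StrictMono σ.symm := by
    intro a b hab
    rcases lt_trichotomy (σ.symm a) (σ.symm b) with h' | h' | h'
    · exact h'
    · exact absurd (congrArg σ h') (by simp [hab.ne])
    · exact absurd (hsm h') (by simp [hab.not_gt])
  refine Equiv.ext fun t => ?_
  haveI : WellFoundedLT (Fin (m' + 1)) := inferInstance
  have h1 : t ≤ σ t := hsm.le_apply
  have h2 : σ t ≤ σ.symm (σ t) := hsm'.le_apply
  rw [Equiv.symm_apply_apply] at h2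
  simp [le_antisymm h2 h1]

/-- For a field `K` and `n ≥ 2`, there exist matrices
`b, a_1, …, a_{2(n-1)} ∈ M_n(K)` such that `trace (b · s_{2(n-1)}(a_1, …, a_{2(n-1)})) ≠ 0`. -/
theorem stmt7 {K : Type*} [Field K] (n : ℕ) (hn : 2 ≤ n) :
    ∃ (b : Matrix (Fin n) (Fin n) K) (a : Fin (2 * (n - 1)) → Matrix (Fin n) (Fin n) K),
      Matrix.trace (b * stdPoly (2 * (n - 1)) a) ≠ 0 := by
  set m := 2 * (n - 1) with hm
  have hm2 : 2 ≤ m := by omega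
  -- the staircase matrix units
  have hb1 : ∀ i : Fin m, (i : ℕ) / 2 < n := fun i => by have := i.2; omega
  have hb2 : ∀ i : Fin m, ((i : ℕ) + 1) / 2 < n := fun i => by have := i.2; omega
  set f : Fin m → Fin n × Fin n :=
    fun i => (⟨(i : ℕ) / 2, hb1 i⟩, ⟨((i : ℕ) + 1) / 2, hb2 i⟩) with hf
  refine ⟨Matrix.single (⟨n - 1, by omega⟩ : Fin n) (⟨0, by omega⟩ : Fin n) (1 : K),
    fun i => Matrix.single (f i).1 (f i).2 (1 : K), ?_⟩
  have htr : ∀ M : Matrix (Fin n) (Fin n) K,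
      Matrix.trace (Matrix.single (⟨n - 1, by omega⟩ : Fin n) ⟨0, by omega⟩ (1 : K) * M)
        = M ⟨0, by omega⟩ ⟨n - 1, by omega⟩ := by
    intro M
    rw [Matrix.trace, Finset.sum_eq_single (⟨n - 1, by omega⟩ : Fin n)]
    · rw [Matrix.diag_apply, Matrix.single_mul_apply_same, one_mul]
    · intro k _ hk
      rw [Matrix.diag_apply]
      exact Matrix.single_mul_apply_of_ne _ _ _ _ _ hk _
    · intro hmem; exact absurd (Finset.mem_univ _) hmem
  have hentry : ∀ σ : Equiv.Perm (Fin m),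
      Matrix.trace (Matrix.single (⟨n - 1, by omega⟩ : Fin n) (⟨0, by omega⟩ : Fin n)
          (1 : K) *
        ((Equiv.Perm.sign σ : ℤ) •
          (List.ofFn fun i =>
            Matrix.single (f (σ i)).1 (f (σ i)).2 (1 : K)).prod))
      = if σ = 1 then 1 else 0 := by
    intro σ
    rw [Matrix.mul_smul, Matrix.trace_smul, htr]
    have hl : (List.ofFn fun i => Matrix.single (f (σ i)).1 (f (σ i)).2 (1 : K))
        = (List.ofFn (f ∘ σ)).map (fun p => Matrix.single p.1 p.2 (1 : K)) := by
      rw [List.map_ofFn]; rfl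
    have hne : List.ofFn (f ∘ σ) ≠ [] := by
      simp only [ne_eq, List.ofFn_eq_nil_iff]; omega
    rw [hl, prodEntry _ hne]
    by_cases hσ : σ = 1
    · subst hσ
      rw [if_pos, if_pos rfl]
      · simp
      refine ⟨?_, ?_, ?_⟩
      · rw [List.head_ofFn]
        exact Fin.ext (by simp [hf])
      · rw [List.getLast_ofFn]
        refine Fin.ext ?_
        show (n - 1 : ℕ) = ((m - 1 : ℕ) + 1) / 2
        omega
      · rw [List.isChain_iff_getElem]
        intro t ht
        rw [List.getElem_ofFn, List.getElem_ofFn]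
        exact Fin.ext rfl
    · rw [if_neg hσ, if_neg, smul_zero]
      rintro ⟨-, -, hchain⟩
      apply hσ
      apply perm_aux
      intro t ht
      have hget := (List.isChain_iff_getElem.mp hchain) t
        (by simpa using by omega)
      rw [List.getElem_ofFn, List.getElem_ofFn] at hget
      exact congrArg Fin.val hget
  rw [stdPoly, Finset.mul_sum, Matrix.trace_sum,
    Finset.sum_congr rfl (fun σ _ => hentry σ), Finset.sum_ite_eq' Finset.univ 1 (fun _ => (1:K))]
  simp
end

section
/- Let K be an algebraically closed field and let Γ_1, Γ_2 ∈ M_2(K). Then the unital K-subalgebra of M_2(K) generated by Γ_1 and Γ_2 equals M_2(K) if and only if det(Γ_1Γ_2 − Γ_2Γ_1) ≠ 0. -/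
open Submodule Matrix

set_option maxHeartbeats 1000000

private lemma stdBasis_repr' {K : Type*} [Field K] (X : Matrix (Fin 2) (Fin 2) K) (p : Fin 2 × Fin 2) :
    (Matrix.stdBasis K (Fin 2) (Fin 2)).repr X p = X p.1 p.2 := by
  obtain ⟨i, j⟩ := p
  simp [Matrix.stdBasis, Pi.basis_repr]

private lemma mem_span4 {K : Type*} [Field K] {M m1 m2 m3 m4 : Matrix (Fin 2) (Fin 2) K}
    (c1 c2 c3 c4 : K) (h : M = c1 • m1 + c2 • m2 + c3 • m3 + c4 • m4) :
    M ∈ Submodule.span K ({m1, m2, m3, m4} : Set (Matrix (Fin 2) (Fin 2) K)) := by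
  subst h
  refine add_mem (add_mem (add_mem ?_ ?_) ?_) ?_ <;>
    exact Submodule.smul_mem _ _ (Submodule.subset_span (by simp))

private lemma mulAA {K : Type*} [Field K] (A B : Matrix (Fin 2) (Fin 2) K) :
    A * A ∈ Submodule.span K ({1, A, B, A*B} : Set (Matrix (Fin 2) (Fin 2) K)) := by
  apply mem_span4 (-(A 0 0 * A 1 1 - A 0 1 * A 1 0)) (A 0 0 + A 1 1) 0 0
  ext i j
  fin_cases i <;> fin_cases j <;>
    simp [Matrix.mul_apply, Fin.sum_univ_two, Matrix.one_apply] <;> ring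

private lemma mulAAB {K : Type*} [Field K] (A B : Matrix (Fin 2) (Fin 2) K) :
    A * (A * B) ∈ Submodule.span K ({1, A, B, A*B} : Set (Matrix (Fin 2) (Fin 2) K)) := by
  apply mem_span4 0 0 (-(A 0 0 * A 1 1 - A 0 1 * A 1 0)) (A 0 0 + A 1 1)
  ext i j
  fin_cases i <;> fin_cases j <;>
    simp [Matrix.mul_apply, Fin.sum_univ_two, Matrix.one_apply] <;> ring

private lemma mulBA {K : Type*} [Field K] (A B : Matrix (Fin 2) (Fin 2) K) :
    B * A ∈ Submodule.span K ({1, A, B, A*B} : Set (Matrix (Fin 2) (Fin 2) K)) := by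
  apply mem_span4
    ((A 0 0 * B 0 0 + A 0 1 * B 1 0 + A 1 0 * B 0 1 + A 1 1 * B 1 1)
      - (A 0 0 + A 1 1) * (B 0 0 + B 1 1)) (B 0 0 + B 1 1) (A 0 0 + A 1 1) (-1)
  ext i j
  fin_cases i <;> fin_cases j <;>
    simp [Matrix.mul_apply, Fin.sum_univ_two, Matrix.one_apply] <;> ring

private lemma mulBB {K : Type*} [Field K] (A B : Matrix (Fin 2) (Fin 2) K) :
    B * B ∈ Submodule.span K ({1, A, B, A*B} : Set (Matrix (Fin 2) (Fin 2) K)) := by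
  apply mem_span4 (-(B 0 0 * B 1 1 - B 0 1 * B 1 0)) 0 (B 0 0 + B 1 1) 0
  ext i j
  fin_cases i <;> fin_cases j <;>
    simp [Matrix.mul_apply, Fin.sum_univ_two, Matrix.one_apply] <;> ring

private lemma mulBAB {K : Type*} [Field K] (A B : Matrix (Fin 2) (Fin 2) K) :
    B * (A * B) ∈ Submodule.span K ({1, A, B, A*B} : Set (Matrix (Fin 2) (Fin 2) K)) := by
  apply mem_span4 (-((A 0 0 + A 1 1) * (B 0 0 * B 1 1 - B 0 1 * B 1 0)))
    (B 0 0 * B 1 1 - B 0 1 * B 1 0)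
    (A 0 0 * B 0 0 + A 0 1 * B 1 0 + A 1 0 * B 0 1 + A 1 1 * B 1 1) 0
  ext i j
  fin_cases i <;> fin_cases j <;>
    simp [Matrix.mul_apply, Fin.sum_univ_two, Matrix.one_apply] <;> ring

private lemma mulABA {K : Type*} [Field K] (A B : Matrix (Fin 2) (Fin 2) K) :
    (A * B) * A ∈ Submodule.span K ({1, A, B, A*B} : Set (Matrix (Fin 2) (Fin 2) K)) := by
  apply mem_span4 (-((B 0 0 + B 1 1) * (A 0 0 * A 1 1 - A 0 1 * A 1 0)))
    (A 0 0 * B 0 0 + A 0 1 * B 1 0 + A 1 0 * B 0 1 + A 1 1 * B 1 1)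
    (A 0 0 * A 1 1 - A 0 1 * A 1 0) 0
  ext i j
  fin_cases i <;> fin_cases j <;>
    simp [Matrix.mul_apply, Fin.sum_univ_two, Matrix.one_apply] <;> ring

private lemma mulABB {K : Type*} [Field K] (A B : Matrix (Fin 2) (Fin 2) K) :
    (A * B) * B ∈ Submodule.span K ({1, A, B, A*B} : Set (Matrix (Fin 2) (Fin 2) K)) := by
  apply mem_span4 0 (-(B 0 0 * B 1 1 - B 0 1 * B 1 0)) 0 (B 0 0 + B 1 1)
  ext i j
  fin_cases i <;> fin_cases j <;>
    simp [Matrix.mul_apply, Fin.sum_univ_two, Matrix.one_apply] <;> ring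

private lemma mulABAB {K : Type*} [Field K] (A B : Matrix (Fin 2) (Fin 2) K) :
    (A * B) * (A * B) ∈ Submodule.span K ({1, A, B, A*B} : Set (Matrix (Fin 2) (Fin 2) K)) := by
  apply mem_span4 (-((A 0 0 * A 1 1 - A 0 1 * A 1 0) * (B 0 0 * B 1 1 - B 0 1 * B 1 0)))
    0 0 (A 0 0 * B 0 0 + A 0 1 * B 1 0 + A 1 0 * B 0 1 + A 1 1 * B 1 1)
  ext i j
  fin_cases i <;> fin_cases j <;>
    simp [Matrix.mul_apply, Fin.sum_univ_two, Matrix.one_apply] <;> ring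

private lemma span_mul_closed {K : Type*} [Field K] (A B : Matrix (Fin 2) (Fin 2) K) :
    ∀ x ∈ ({1, A, B, A*B} : Set (Matrix (Fin 2) (Fin 2) K)),
    ∀ y ∈ ({1, A, B, A*B} : Set (Matrix (Fin 2) (Fin 2) K)),
      x * y ∈ Submodule.span K ({1, A, B, A*B} : Set (Matrix (Fin 2) (Fin 2) K)) := by
  intro x hx y hy
  simp only [Set.mem_insert_iff, Set.mem_singleton_iff] at hx hy
  rcases hx with h | h | h | h <;> rw [h] <;> clear h <;>
    rcases hy with h | h | h | h <;> rw [h] <;> clear h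
  · rw [one_mul]; exact Submodule.subset_span (by simp)
  · rw [one_mul]; exact Submodule.subset_span (by simp)
  · rw [one_mul]; exact Submodule.subset_span (by simp)
  · rw [one_mul]; exact Submodule.subset_span (by simp)
  · rw [mul_one]; exact Submodule.subset_span (by simp)
  · exact mulAA A B
  · exact Submodule.subset_span (by simp)
  · exact mulAAB A B
  · rw [mul_one]; exact Submodule.subset_span (by simp)
  · exact mulBA A B
  · exact mulBB A B
  · exact mulBAB A B
  · rw [mul_one]; exact Submodule.subset_span (by simp)
  · exact mulABA A B
  · exact mulABB A B
  · exact mulABAB A B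

private lemma det_four {K : Type*} [Field K] (A B : Matrix (Fin 2) (Fin 2) K) :
    ((Matrix.stdBasis K (Fin 2) (Fin 2)).reindex finProdFinEquiv).det ![1, A, B, A*B]
      = (A * B - B * A).det := by
  rw [Module.Basis.det_apply]
  have h : ((Matrix.stdBasis K (Fin 2) (Fin 2)).reindex finProdFinEquiv).toMatrix ![1, A, B, A*B]
      = !![1, A 0 0, B 0 0, (A*B) 0 0;
           0, A 0 1, B 0 1, (A*B) 0 1;
           0, A 1 0, B 1 0, (A*B) 1 0;
           1, A 1 1, B 1 1, (A*B) 1 1] := by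
    ext i j
    fin_cases i <;> fin_cases j <;>
      simp [Module.Basis.toMatrix_apply, Module.Basis.repr_reindex_apply, stdBasis_repr',
        show finProdFinEquiv.symm (0 : Fin 4) = ((0:Fin 2),(0:Fin 2)) from rfl,
        show finProdFinEquiv.symm (1 : Fin 4) = ((0:Fin 2),(1:Fin 2)) from rfl,
        show finProdFinEquiv.symm (2 : Fin 4) = ((1:Fin 2),(0:Fin 2)) from rfl,
        show finProdFinEquiv.symm (3 : Fin 4) = ((1:Fin 2),(1:Fin 2)) from rfl,
        Matrix.one_apply]
  rw [h]
  simp [Matrix.det_succ_row_zero, Fin.sum_univ_succ, Matrix.det_fin_two,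
    Matrix.mul_apply, Fin.sum_univ_two, Matrix.cons_val_two, Matrix.cons_val_three,
    show Fin.castSucc (2:Fin 3) = (2:Fin 4) from rfl,
    show Fin.succAbove (1:Fin 4) (2:Fin 3) = (3:Fin 4) from rfl,
    show Fin.succAbove (2:Fin 4) (2:Fin 3) = (3:Fin 4) from rfl,
    show Fin.succAbove (3:Fin 4) (2:Fin 3) = (2:Fin 4) from rfl]
  ring

/-- Over an algebraically closed field `K`, two matrices
`Γ_1, Γ_2 ∈ M_2(K)` generate `M_2(K)` as a unital `K`-algebra iff
`det (Γ_1Γ_2 − Γ_2Γ_1) ≠ 0`. -/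
theorem stmt12 {K : Type*} [Field K] [IsAlgClosed K]
    (Γ₁ Γ₂ : Matrix (Fin 2) (Fin 2) K) :
    Algebra.adjoin K {Γ₁, Γ₂} = ⊤ ↔ (Γ₁ * Γ₂ - Γ₂ * Γ₁).det ≠ 0 := by
  set s : Set (Matrix (Fin 2) (Fin 2) K) := {1, Γ₁, Γ₂, Γ₁*Γ₂} with hs
  have hone : (1 : Matrix (Fin 2) (Fin 2) K) ∈ Submodule.span K s :=
    Submodule.subset_span (by simp [hs])
  have hmul' : ∀ x y : Matrix (Fin 2) (Fin 2) K,
      x ∈ Submodule.span K s → y ∈ Submodule.span K s → x * y ∈ Submodule.span K s := by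
    intro x y hx hy
    induction hx using Submodule.span_induction generalizing y with
    | mem x hxs =>
      induction hy using Submodule.span_induction with
      | mem y hys => exact span_mul_closed Γ₁ Γ₂ x hxs y hys
      | zero => rw [mul_zero]; exact (Submodule.span K s).zero_mem
      | add a b _ _ ha hb => rw [mul_add]; exact add_mem ha hb
      | smul c a _ ha => rw [mul_smul_comm]; exact Submodule.smul_mem _ _ ha
    | zero => rw [zero_mul]; exact (Submodule.span K s).zero_mem
    | add a b _ _ ha hb => rw [add_mul]; exact add_mem (ha y hy) (hb y hy)
    | smul c a _ ha => rw [smul_mul_assoc]; exact Submodule.smul_mem _ _ (ha y hy)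
  have hadj : Algebra.adjoin K {Γ₁, Γ₂}
      = (Submodule.span K s).toSubalgebra hone hmul' := by
    apply le_antisymm
    · apply Algebra.adjoin_le
      rintro x (rfl | rfl)
      · exact Submodule.subset_span (by simp [hs])
      · exact Submodule.subset_span (by simp [hs])
    · intro x hx
      have hx' : x ∈ Submodule.span K s := hx
      have hle : Submodule.span K s
          ≤ Subalgebra.toSubmodule (Algebra.adjoin K ({Γ₁, Γ₂} : Set (Matrix (Fin 2) (Fin 2) K))) := by
        rw [Submodule.span_le]
        rintro y (rfl | rfl | rfl | rfl)
        · exact Subalgebra.one_mem _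
        · exact Algebra.subset_adjoin (by simp)
        · exact Algebra.subset_adjoin (by simp)
        · exact Subalgebra.mul_mem _ (Algebra.subset_adjoin (by simp))
            (Algebra.subset_adjoin (by simp))
      exact hle hx'
  rw [hadj]
  have htop : (Submodule.span K s).toSubalgebra hone hmul' = ⊤ ↔ Submodule.span K s = ⊤ := by
    rw [← Algebra.toSubmodule_eq_top, Submodule.toSubalgebra_toSubmodule]
  rw [htop]
  set e := (Matrix.stdBasis K (Fin 2) (Fin 2)).reindex finProdFinEquiv with he
  set v : Fin 4 → Matrix (Fin 2) (Fin 2) K := ![1, Γ₁, Γ₂, Γ₁*Γ₂] with hv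
  have hrange : Set.range v = s := by
    ext x
    constructor
    · rintro ⟨i, rfl⟩
      fin_cases i <;> simp [hv, hs]
    · rintro (rfl | rfl | rfl | rfl)
      exacts [⟨0, rfl⟩, ⟨1, rfl⟩, ⟨2, rfl⟩, ⟨3, rfl⟩]
  have hfr : Fintype.card (Fin 4) = Module.finrank K (Matrix (Fin 2) (Fin 2) K) := by
    simp [Module.finrank_matrix]
  constructor
  · intro h
    have hsp : ⊤ ≤ Submodule.span K (Set.range v) := by rw [hrange, h]
    have hli : LinearIndependent K v :=
      linearIndependent_of_top_le_span_of_card_eq_finrank hsp hfr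
    have hu := (Module.Basis.is_basis_iff_det e).1 ⟨hli, by rw [hrange]; exact h⟩
    rw [← det_four Γ₁ Γ₂]
    exact IsUnit.ne_zero hu
  · intro h
    have hu : IsUnit (e.det v) := by
      rw [he, hv, det_four Γ₁ Γ₂]
      exact isUnit_iff_ne_zero.2 h
    have hsp := ((Module.Basis.is_basis_iff_det e).2 hu).2
    rwa [hrange] at hsp
end
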